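/- For any unitary N×N complex matrix U with c(U) = sup_{i,j} |U_{ij}|, and any normalized vector ψ ∈ ℂ^N, the Shannon entropies satisfy h(ψ) + h(Uψ) ≥ -2 log c(U), where h(ψ) = -∑_i |ψ_i|² log |ψ_i|². -/

import Mathlib

open scoped BigOperators
open Finset

namespace EUP

/-- phase of a complex number -/
noncomputable def ph (w : ℂ) : ℂ := if w = 0 then 0 else w / ‖w‖

lemma ph_zero : ph 0 = 0 := by simp [ph]

lemma norm_ph_le (w : ℂ) : ‖ph w‖ ≤ 1 := by
  by_cases h : w = 0
  · simp [ph, h]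
  · simp only [ph, if_neg h]
    rw [norm_div, Complex.norm_real, norm_norm, div_self (norm_ne_zero_iff.mpr h)]

lemma norm_ph (w : ℂ) (h : w ≠ 0) : ‖ph w‖ = 1 := by
  simp only [ph, if_neg h]
  rw [norm_div, Complex.norm_real, norm_norm, div_self (norm_ne_zero_iff.mpr h)]

lemma ph_mul_norm (w : ℂ) : ph w * (‖w‖ : ℂ) = w := by
  by_cases h : w = 0
  · simp [ph, h]
  · simp only [ph, if_neg h]
    have : (‖w‖:ℂ) ≠ 0 := by
      simpa using norm_ne_zero_iff.mpr h
    rw [div_mul_cancel₀ _ this]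

/-- Cauchy–Schwarz for sums, in the form we need. -/
lemma cs_sum {N : ℕ} (f g : Fin N → ℝ) (hf : ∀ i, 0 ≤ f i) (hg : ∀ i, 0 ≤ g i) :
    ∑ i, f i * g i ≤ ((∑ i, f i ^ 2) * (∑ i, g i ^ 2)) ^ ((1:ℝ)/2) := by
  have h := Finset.sum_mul_sq_le_sq_mul_sq Finset.univ f g
  have h1 : (0:ℝ) ≤ ∑ i, f i * g i := Finset.sum_nonneg fun i _ => mul_nonneg (hf i) (hg i)
  have h2 : (0:ℝ) ≤ (∑ i, f i ^ 2) * (∑ i, g i ^ 2) :=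
    mul_nonneg (Finset.sum_nonneg fun i _ => sq_nonneg _)
      (Finset.sum_nonneg fun i _ => sq_nonneg _)
  rw [show ((∑ i, f i ^ 2) * (∑ i, g i ^ 2) : ℝ) ^ ((1:ℝ)/2)
      = Real.sqrt ((∑ i, f i ^ 2) * (∑ i, g i ^ 2)) by
    rw [Real.sqrt_eq_rpow]]
  rw [show (∑ i, f i * g i : ℝ) = Real.sqrt ((∑ i, f i * g i) ^ 2) by
    rw [Real.sqrt_sq h1]]
  exact Real.sqrt_le_sqrt h

/-- unitarity gives preservation of the ℓ² sums -/
lemma iso_of_unitary {N : ℕ} {U : Matrix (Fin N) (Fin N) ℂ}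
    (hU : U ∈ Matrix.unitaryGroup (Fin N) ℂ) (x : Fin N → ℂ) :
    ∑ j, ‖U.mulVec x j‖ ^ 2 = ∑ i, ‖x i‖ ^ 2 := by
  have key : dotProduct (star (U.mulVec x)) (U.mulVec x)
      = dotProduct (star x) x := by
    rw [Matrix.star_mulVec, Matrix.dotProduct_mulVec, Matrix.vecMul_vecMul]
    have : U.conjTranspose * U = 1 := hU.1
    rw [this, Matrix.vecMul_one]
  have expand : ∀ y : Fin N → ℂ, dotProduct (star y) y = ((∑ i, ‖y i‖ ^ 2 : ℝ) : ℂ) := by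
    intro y
    simp only [dotProduct, Pi.star_apply]
    push_cast
    congr 1
    funext i
    rw [show (star (y i)) = (starRingEnd ℂ) (y i) from rfl]
    rw [mul_comm, Complex.mul_conj, Complex.normSq_eq_norm_sq]
    norm_cast
  rw [expand, expand] at key
  exact_mod_cast key

section Core

variable {N : ℕ} (U : Matrix (Fin N) (Fin N) ℂ)

/-- The core three-lines (Riesz–Thorin type) bound. All `^` with real exponents are `rpow`. -/
lemma core (hiso : ∀ x : Fin N → ℂ, ∑ j, ‖U.mulVec x j‖ ^ 2 = ∑ i, ‖x i‖ ^ 2)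
    {c : ℝ} (hc0 : 0 < c) (hc : ∀ i j, ‖U i j‖ ≤ c)
    {t : ℝ} (ht : t ∈ Set.Ioo (0:ℝ) 1) (b ψ : Fin N → ℂ) :
    ‖∑ j, b j * U.mulVec ψ j‖ ≤
      c ^ t * (∑ j, ‖b j‖ ^ (2/(1+t))) ^ ((1+t)/2) * (∑ i, ‖ψ i‖ ^ (2/(1+t))) ^ ((1+t)/2) := by
  obtain ⟨ht0, ht1⟩ := ht
  have h1t : (0:ℝ) < 1 + t := by linarith
  set k : ℝ := (1+t)⁻¹ with hkdef
  have hkpos : 0 < k := inv_pos.mpr h1t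
  have hk1 : (1+t) * k = 1 := mul_inv_cancel₀ (ne_of_gt h1t)
  set L : Fin N → ℝ := fun j => k * Real.log ‖b j‖ with hLdef
  set M : Fin N → ℝ := fun i => k * Real.log ‖ψ i‖ with hMdef
  set Sb : ℝ := ∑ j, ‖b j‖ ^ (2/(1+t)) with hSbdef
  set Sψ : ℝ := ∑ i, ‖ψ i‖ ^ (2/(1+t)) with hSψdef
  have hSb0 : 0 ≤ Sb := Finset.sum_nonneg fun j _ => Real.rpow_nonneg (norm_nonneg _) _
  have hSψ0 : 0 ≤ Sψ := Finset.sum_nonneg fun i _ => Real.rpow_nonneg (norm_nonneg _) _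
  -- the rpow values, when entries are nonzero
  have hrpow : ∀ w : ℂ, w ≠ 0 → ‖w‖ ^ (2/(1+t)) = Real.exp (2 * (k * Real.log ‖w‖)) := by
    intro w hw
    have hw0 : 0 < ‖w‖ := norm_pos_iff.mpr hw
    rw [Real.rpow_def_of_pos hw0]
    congr 1
    rw [div_eq_mul_inv]
    ring
  set F : ℂ → ℂ := fun z => ∑ j, ∑ i,
      ph (b j) * U j i * ph (ψ i) * Complex.exp ((1+z) * ((L j + M i : ℝ) : ℂ)) with hFdef
  have hre : ∀ (z : ℂ) (r : ℝ), (((1+z) * (r:ℂ)).re) = (1+z.re) * r := by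
    intro z r
    simp [Complex.mul_re, Complex.add_re, Complex.add_im]
  -- differentiability
  have hdiff : Differentiable ℂ F := by
    refine Differentiable.fun_sum fun j _ => Differentiable.fun_sum fun i _ => ?_
    exact (differentiable_const _).mul
      ((((differentiable_const (1:ℂ)).add differentiable_id).mul (differentiable_const _)).cexp)
  -- norm of each term
  have hterm : ∀ (z : ℂ) (j i : Fin N),
      ‖ph (b j) * U j i * ph (ψ i) * Complex.exp ((1+z) * ((L j + M i : ℝ) : ℂ))‖
      = ‖ph (b j)‖ * ‖U j i‖ * ‖ph (ψ i)‖ * Real.exp ((1+z.re) * (L j + M i)) := by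
    intro z j i
    rw [norm_mul, norm_mul, norm_mul]
    congr 1
    rw [show ‖Complex.exp ((1+z) * ((L j + M i : ℝ) : ℂ))‖
        = Real.exp (((1+z) * ((L j + M i : ℝ) : ℂ)).re) from Complex.norm_exp _]
    rw [hre]
  -- edge at re = 0
  have hedge0 : ∀ z : ℂ, z.re = 0 → ‖F z‖ ≤ (Sb * Sψ) ^ ((1:ℝ)/2) := by
    intro z hz
    set B : Fin N → ℂ := fun j => ph (b j) * Complex.exp ((1+z) * ((L j : ℝ) : ℂ)) with hBdef
    set C : Fin N → ℂ := fun i => ph (ψ i) * Complex.exp ((1+z) * ((M i : ℝ) : ℂ)) with hCdef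
    have hFz : F z = ∑ j, B j * U.mulVec C j := by
      rw [hFdef]
      refine Finset.sum_congr rfl fun j _ => ?_
      simp only [Matrix.mulVec, dotProduct, Finset.mul_sum]
      refine Finset.sum_congr rfl fun i _ => ?_
      rw [Complex.ofReal_add, mul_add, Complex.exp_add]
      ring
    have hnB : ∀ j, ‖B j‖ ^ 2 = ‖b j‖ ^ (2/(1+t)) := by
      intro j
      by_cases hb : b j = 0
      · rw [hBdef]
        simp only [hb, ph_zero, zero_mul, norm_zero]
        rw [Real.zero_rpow (by positivity)]
        norm_num
      · rw [hrpow _ hb]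
        have : ‖B j‖ = Real.exp (L j) := by
          rw [hBdef]
          simp only
          rw [norm_mul, norm_ph _ hb, one_mul,
            show ‖Complex.exp ((1+z) * ((L j : ℝ) : ℂ))‖
              = Real.exp (((1+z) * ((L j : ℝ) : ℂ)).re) from Complex.norm_exp _, hre, hz]
          norm_num
        rw [this, sq, ← Real.exp_add]
        congr 1
        ring
    have hnC : ∀ i, ‖C i‖ ^ 2 = ‖ψ i‖ ^ (2/(1+t)) := by
      intro i
      by_cases hb : ψ i = 0
      · rw [hCdef]
        simp only [hb, ph_zero, zero_mul, norm_zero]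
        rw [Real.zero_rpow (by positivity)]
        norm_num
      · rw [hrpow _ hb]
        have : ‖C i‖ = Real.exp (M i) := by
          rw [hCdef]
          simp only
          rw [norm_mul, norm_ph _ hb, one_mul,
            show ‖Complex.exp ((1+z) * ((M i : ℝ) : ℂ))‖
              = Real.exp (((1+z) * ((M i : ℝ) : ℂ)).re) from Complex.norm_exp _, hre, hz]
          norm_num
        rw [this, sq, ← Real.exp_add]
        congr 1
        ring
    calc ‖F z‖ ≤ ∑ j, ‖B j * U.mulVec C j‖ := by rw [hFz]; exact norm_sum_le _ _
    _ = ∑ j, ‖B j‖ * ‖U.mulVec C j‖ := by simp [norm_mul]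
    _ ≤ ((∑ j, ‖B j‖ ^ 2) * (∑ j, ‖U.mulVec C j‖ ^ 2)) ^ ((1:ℝ)/2) :=
        cs_sum _ _ (fun j => norm_nonneg _) (fun j => norm_nonneg _)
    _ = (Sb * Sψ) ^ ((1:ℝ)/2) := by
        rw [hiso C]
        congr 2
        · rw [hSbdef]; exact Finset.sum_congr rfl fun j _ => hnB j
        · rw [hSψdef]; exact Finset.sum_congr rfl fun i _ => hnC i
  -- edge at re = 1
  have hedge1 : ∀ z : ℂ, z.re = 1 → ‖F z‖ ≤ c * Sb * Sψ := by
    intro z hz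
    have key : ∀ j i, ‖ph (b j) * U j i * ph (ψ i) * Complex.exp ((1+z) * ((L j + M i : ℝ) : ℂ))‖
        ≤ c * (‖b j‖ ^ (2/(1+t)) * ‖ψ i‖ ^ (2/(1+t))) := by
      intro j i
      rw [hterm z j i, hz]
      by_cases hb : b j = 0
      · simp only [hb, ph_zero, norm_zero, zero_mul]
        positivity
      by_cases hp : ψ i = 0
      · simp only [hp, ph_zero, norm_zero, mul_zero, zero_mul]
        positivity
      rw [norm_ph _ hb, norm_ph _ hp, one_mul, mul_one, hrpow _ hb, hrpow _ hp,
        ← Real.exp_add]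
      rw [show (1+(1:ℝ)) * (L j + M i) = 2 * (k * Real.log ‖b j‖) + 2 * (k * Real.log ‖ψ i‖) by
        simp only [hLdef, hMdef]; ring]
      exact mul_le_mul_of_nonneg_right (hc j i) (Real.exp_nonneg _)
    calc ‖F z‖ ≤ ∑ j, ∑ i, ‖ph (b j) * U j i * ph (ψ i)
          * Complex.exp ((1+z) * ((L j + M i : ℝ) : ℂ))‖ := by
          refine (norm_sum_le _ _).trans ?_
          exact Finset.sum_le_sum fun j _ => norm_sum_le _ _
    _ ≤ ∑ j, ∑ i, c * (‖b j‖ ^ (2/(1+t)) * ‖ψ i‖ ^ (2/(1+t))) :=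
          Finset.sum_le_sum fun j _ => Finset.sum_le_sum fun i _ => key j i
    _ = c * Sb * Sψ := by
          simp_rw [← Finset.mul_sum, ← Finset.sum_mul]
          rw [hSbdef, hSψdef]
          ring
  -- boundedness on the strip
  have hbdd : BddAbove ((norm ∘ F) '' (Complex.HadamardThreeLines.verticalClosedStrip 0 1)) := by
    refine ⟨∑ j, ∑ i, ‖U j i‖ * Real.exp (2 * |L j + M i|), ?_⟩
    rintro x ⟨z, hz, rfl⟩
    simp only [Function.comp_apply]
    refine (norm_sum_le _ _).trans ?_
    refine (Finset.sum_le_sum fun j (_ : j ∈ Finset.univ) => norm_sum_le _ _).trans ?_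
    refine Finset.sum_le_sum fun j _ => Finset.sum_le_sum fun i _ => ?_
    rw [hterm z j i]
    have hz01 : z.re ∈ Set.Icc (0:ℝ) 1 := hz
    have hle : (1 + z.re) * (L j + M i) ≤ 2 * |L j + M i| := by
      obtain ⟨hz0, hz1⟩ := hz01
      rcases le_or_gt 0 (L j + M i) with hL0 | hL0
      · nlinarith [le_abs_self (L j + M i)]
      · nlinarith [neg_abs_le (L j + M i)]
    calc ‖ph (b j)‖ * ‖U j i‖ * ‖ph (ψ i)‖ * Real.exp ((1 + z.re) * (L j + M i))
        ≤ 1 * ‖U j i‖ * 1 * Real.exp (2 * |L j + M i|) := by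
          gcongr
          · exact norm_ph_le _
          · exact norm_ph_le _
    _ = ‖U j i‖ * Real.exp (2 * |L j + M i|) := by ring
  -- value at t
  have hFt : F (t:ℂ) = ∑ j, b j * U.mulVec ψ j := by
    rw [hFdef]
    refine Finset.sum_congr rfl fun j _ => ?_
    simp only [Matrix.mulVec, dotProduct, Finset.mul_sum]
    refine Finset.sum_congr rfl fun i _ => ?_
    by_cases hb : b j = 0
    · simp [hb, ph_zero]
    by_cases hp : ψ i = 0
    · simp [hp, ph_zero]
    have harg : ((1:ℂ)+(t:ℂ)) * ((L j + M i : ℝ) : ℂ)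
        = ((Real.log ‖b j‖ + Real.log ‖ψ i‖ : ℝ) : ℂ) := by
      have hr : (1+t) * (L j + M i) = Real.log ‖b j‖ + Real.log ‖ψ i‖ := by
        simp only [hLdef, hMdef]
        rw [mul_add, ← mul_assoc, ← mul_assoc, hk1, one_mul, one_mul]
      calc ((1:ℂ)+(t:ℂ)) * ((L j + M i : ℝ) : ℂ)
          = (((1+t) * (L j + M i) : ℝ) : ℂ) := by push_cast; ring
      _ = _ := by rw [hr]
    rw [harg, ← Complex.ofReal_exp, Real.exp_add,
      Real.exp_log (norm_pos_iff.mpr hb), Real.exp_log (norm_pos_iff.mpr hp)]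
    rw [show ph (b j) * U j i * ph (ψ i) * ((‖b j‖ * ‖ψ i‖ : ℝ) : ℂ)
        = (ph (b j) * (‖b j‖:ℂ)) * U j i * (ph (ψ i) * (‖ψ i‖:ℂ)) from by push_cast; ring,
      ph_mul_norm, ph_mul_norm]
    ring
  -- apply the three lines theorem
  have hmem : (t:ℂ) ∈ Complex.HadamardThreeLines.verticalClosedStrip 0 1 := by
    show (t:ℂ).re ∈ Set.Icc (0:ℝ) 1
    rw [Complex.ofReal_re]
    exact ⟨le_of_lt ht0, le_of_lt ht1⟩
  have h3 := Complex.HadamardThreeLines.norm_le_interp_of_mem_verticalClosedStrip' (f := F) zero_lt_one hmem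
    hdiff.diffContOnCl hbdd
    (fun z hz => hedge0 z hz) (fun z hz => hedge1 z hz)
  rw [hFt, Complex.ofReal_re, sub_zero, sub_zero, div_one] at h3
  refine h3.trans (le_of_eq ?_)
  have e1 : ((Sb*Sψ) ^ ((1:ℝ)/2)) ^ (1-t) = Sb ^ ((1-t)/2) * Sψ ^ ((1-t)/2) := by
    rw [← Real.rpow_mul (mul_nonneg hSb0 hSψ0), Real.mul_rpow hSb0 hSψ0,
      show (1:ℝ)/2 * (1-t) = (1-t)/2 from by ring]
  have e2 : (c*Sb*Sψ) ^ t = c ^ t * Sb ^ t * Sψ ^ t := by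
    rw [Real.mul_rpow (mul_nonneg (le_of_lt hc0) hSb0) hSψ0, Real.mul_rpow (le_of_lt hc0) hSb0]
  have e3 : Sb ^ ((1+t)/2) = Sb ^ ((1-t)/2) * Sb ^ t := by
    rw [show (1+t)/2 = (1-t)/2 + t by ring]
    exact Real.rpow_add' hSb0 (ne_of_gt (by nlinarith))
  have e4 : Sψ ^ ((1+t)/2) = Sψ ^ ((1-t)/2) * Sψ ^ t := by
    rw [show (1+t)/2 = (1-t)/2 + t by ring]
    exact Real.rpow_add' hSψ0 (ne_of_gt (by nlinarith))
  rw [e1, e2, e3, e4]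
  ring

end Core

/-- derivative of `t ↦ a ^ (1-t)⁻¹` at `0`. -/
lemma deriv_aux1 {a : ℝ} (ha : 0 ≤ a) :
    HasDerivAt (fun t : ℝ => a ^ ((1-t)⁻¹)) (a * Real.log a) 0 := by
  rcases ha.eq_or_lt with h | h
  · subst h
    have : (fun t : ℝ => (0:ℝ) ^ ((1-t)⁻¹)) =ᶠ[nhds 0] fun _ => (0:ℝ) := by
      filter_upwards [Ioo_mem_nhds (show (-1:ℝ) < 0 by norm_num) (show (0:ℝ) < 1 by norm_num)]
        with t htmem
      have : (1 - t) ≠ 0 := by cases htmem; intro hh; linarith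
      rw [Real.zero_rpow (by positivity)]
    rw [show (0:ℝ) * Real.log 0 = 0 by ring]
    exact (hasDerivAt_const 0 (0:ℝ)).congr_of_eventuallyEq this
  · have h1 : HasDerivAt (fun t : ℝ => 1 - t) (-1) 0 := by
      simpa using (hasDerivAt_id (0:ℝ)).const_sub 1
    have h2 : HasDerivAt (fun t : ℝ => (1-t)⁻¹) 1 0 := by
      have := h1.inv (by norm_num)
      simpa [Pi.inv_def] using this
    have h3 : HasDerivAt (fun t : ℝ => Real.log a * (1-t)⁻¹) (Real.log a) 0 := by
      simpa using h2.const_mul (Real.log a)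
    have h4 := h3.exp
    have : (fun t : ℝ => a ^ ((1-t)⁻¹)) = fun t => Real.exp (Real.log a * (1-t)⁻¹) := by
      funext t; rw [Real.rpow_def_of_pos h]
    rw [this]
    convert h4 using 1
    simp only [sub_zero, inv_one, mul_one, Real.exp_log h]

/-- derivative of `t ↦ a ^ (1+t)⁻¹` at `0`. -/
lemma deriv_aux2 {a : ℝ} (ha : 0 ≤ a) :
    HasDerivAt (fun t : ℝ => a ^ ((1+t)⁻¹)) (-(a * Real.log a)) 0 := by
  rcases ha.eq_or_lt with h | h
  · subst h
    have : (fun t : ℝ => (0:ℝ) ^ ((1+t)⁻¹)) =ᶠ[nhds 0] fun _ => (0:ℝ) := by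
      filter_upwards [Ioo_mem_nhds (show (-1:ℝ) < 0 by norm_num) (show (0:ℝ) < 1 by norm_num)]
        with t htmem
      have : (1 + t) ≠ 0 := by cases htmem; intro hh; linarith
      rw [Real.zero_rpow (by positivity)]
    rw [show -((0:ℝ) * Real.log 0) = 0 by ring]
    exact (hasDerivAt_const 0 (0:ℝ)).congr_of_eventuallyEq this
  · have h1 : HasDerivAt (fun t : ℝ => 1 + t) 1 0 := by
      simpa using (hasDerivAt_id (0:ℝ)).const_add 1
    have h2 : HasDerivAt (fun t : ℝ => (1+t)⁻¹) (-1) 0 := by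
      have := h1.inv (by norm_num)
      simpa [Pi.inv_def] using this
    have h3 : HasDerivAt (fun t : ℝ => Real.log a * (1+t)⁻¹) (-Real.log a) 0 := by
      simpa using h2.const_mul (Real.log a)
    have h4 := h3.exp
    have : (fun t : ℝ => a ^ ((1+t)⁻¹)) = fun t => Real.exp (Real.log a * (1+t)⁻¹) := by
      funext t; rw [Real.rpow_def_of_pos h]
    rw [this]
    convert h4 using 1
    simp only [add_zero, inv_one, mul_one, Real.exp_log h]
    ring

end EUP

open EUP

/-- Shannon entropy of a vector in `ℂ^N` with respect to the canonical basis,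
with the convention `0 * log 0 = 0`. -/
noncomputable def shannonEntropy {N : ℕ} (ψ : Fin N → ℂ) : ℝ :=
  -∑ i, ‖ψ i‖ ^ 2 * Real.log (‖ψ i‖ ^ 2)

/-- **Entropic Uncertainty Principle** (Maassen–Uffink): for a unitary `N × N` matrix `U`
with `c(U) = sup_{i,j} |U_{ij}|` and any normalized `ψ ∈ ℂ^N`,
`h(ψ) + h(Uψ) ≥ -2 log c(U)`. -/
theorem entropic_uncertainty_principle {N : ℕ} (U : Matrix (Fin N) (Fin N) ℂ)
    (hU : U ∈ Matrix.unitaryGroup (Fin N) ℂ)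
    (c : ℝ) (hc : IsGreatest {x : ℝ | ∃ i j, x = ‖U i j‖} c)
    (ψ : Fin N → ℂ) (hψ : ∑ i, ‖ψ i‖ ^ 2 = 1) :
    -2 * Real.log c ≤ shannonEntropy ψ + shannonEntropy (U.mulVec ψ) := by
  classical
  set φ : Fin N → ℂ := U.mulVec ψ with hφdef
  set p : Fin N → ℝ := fun i => ‖ψ i‖ ^ 2 with hpdef
  set q : Fin N → ℝ := fun j => ‖φ j‖ ^ 2 with hqdef
  have hp0 : ∀ i, 0 ≤ p i := fun i => sq_nonneg _
  have hq0 : ∀ j, 0 ≤ q j := fun j => sq_nonneg _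
  have hiso := iso_of_unitary hU
  have hpsum : ∑ i, p i = 1 := hψ
  have hqsum : ∑ j, q j = 1 := by
    have := hiso ψ
    rw [← hφdef] at this
    rw [show (∑ j, q j) = ∑ j, ‖φ j‖ ^ 2 from rfl, this]
    exact hψ
  have hcub : ∀ i j, ‖U i j‖ ≤ c := fun i j => hc.2 ⟨i, j, rfl⟩
  have hcnn : 0 ≤ c := by
    obtain ⟨⟨i, j, hij⟩, -⟩ := hc
    rw [hij]; exact norm_nonneg _
  have hc0 : 0 < c := by
    rcases hcnn.eq_or_lt with h | h
    · exfalso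
      have hUz : ∀ i j, U i j = 0 := fun i j =>
        norm_eq_zero.mp (le_antisymm (h ▸ hcub i j) (norm_nonneg _))
      have hφz : ∀ j, φ j = 0 := by
        intro j
        rw [hφdef]
        simp [Matrix.mulVec, dotProduct, hUz]
      have : (1:ℝ) = 0 := by
        rw [← hqsum]
        refine Finset.sum_eq_zero fun j _ => ?_
        rw [show q j = ‖φ j‖ ^ 2 from rfl, hφz j]
        simp
      norm_num at this
    · exact h
  -- positivity of the Rényi sums
  have hexq : ∃ j, 0 < q j := by
    by_contra h
    push_neg at h
    have : ∑ j, q j = 0 := Finset.sum_eq_zero fun j _ => le_antisymm (h j) (hq0 j)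
    rw [hqsum] at this; norm_num at this
  have hexp : ∃ i, 0 < p i := by
    by_contra h
    push_neg at h
    have : ∑ i, p i = 0 := Finset.sum_eq_zero fun i _ => le_antisymm (h i) (hp0 i)
    rw [hpsum] at this; norm_num at this
  set Q : ℝ → ℝ := fun t => ∑ j, (q j) ^ ((1-t)⁻¹) with hQdef
  set P : ℝ → ℝ := fun t => ∑ i, (p i) ^ ((1+t)⁻¹) with hPdef
  set g : ℝ → ℝ := fun t => (1-t)/2 * Real.log (Q t) - (1+t)/2 * Real.log (P t) with hgdef
  have hQ0 : Q 0 = 1 := by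
    rw [hQdef]
    simp only [sub_zero, inv_one, Real.rpow_one]
    exact hqsum
  have hP0 : P 0 = 1 := by
    rw [hPdef]
    simp only [add_zero, inv_one, Real.rpow_one]
    exact hpsum
  have hg0 : g 0 = 0 := by
    rw [hgdef]
    simp [hQ0, hP0]
  -- helper for rpow conversions
  have hhelp : ∀ (x : ℝ), 0 ≤ x → ∀ (e : ℝ), x ^ (2 * e) = (x ^ 2) ^ e := by
    intro x hx e
    rw [Real.rpow_mul hx, show (2:ℝ) = ((2:ℕ):ℝ) from by norm_num, Real.rpow_natCast]
  -- Claim A : g t ≤ t * log c on (0,1)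
  have claimA : ∀ t, t ∈ Set.Ioo (0:ℝ) 1 → g t ≤ t * Real.log c := by
    intro t ht
    obtain ⟨ht0, ht1⟩ := ht
    have h1t : (0:ℝ) < 1 - t := by linarith
    have h1t' : (0:ℝ) < 1 + t := by linarith
    set b : Fin N → ℂ := fun j => (starRingEnd ℂ) (φ j) * ((‖φ j‖ ^ (2*t/(1-t)) : ℝ) : ℂ)
      with hbdef
    have hQpos : 0 < Q t := by
      obtain ⟨j0, hj0⟩ := hexq
      exact Finset.sum_pos' (fun j _ => Real.rpow_nonneg (hq0 j) _)
        ⟨j0, Finset.mem_univ _, Real.rpow_pos_of_pos hj0 _⟩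
    have hPpos : 0 < P t := by
      obtain ⟨i0, hi0⟩ := hexp
      exact Finset.sum_pos' (fun i _ => Real.rpow_nonneg (hp0 i) _)
        ⟨i0, Finset.mem_univ _, Real.rpow_pos_of_pos hi0 _⟩
    have hbφ : ∀ j, b j * φ j = ((q j ^ ((1-t)⁻¹) : ℝ) : ℂ) := by
      intro j
      rw [hbdef]
      simp only
      rw [show (starRingEnd ℂ) (φ j) * ((‖φ j‖ ^ (2*t/(1-t)) : ℝ) : ℂ) * φ j
          = φ j * (starRingEnd ℂ) (φ j) * ((‖φ j‖ ^ (2*t/(1-t)) : ℝ) : ℂ) from by ring,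
        Complex.mul_conj]
      rw [show q j ^ ((1-t)⁻¹) = ‖φ j‖ ^ (2 * (1-t)⁻¹) from (hhelp _ (norm_nonneg _) _).symm]
      rw [show (2:ℝ) * (1-t)⁻¹ = 2 + 2*t/(1-t) from by field_simp; ring]
      rw [Real.rpow_add' (norm_nonneg _) (by
        have h2 : 0 ≤ 2*t/(1-t) := le_of_lt (div_pos (by linarith) h1t)
        intro hcon; nlinarith)]
      rw [show ‖φ j‖ ^ (2:ℝ) = ‖φ j‖ ^ (2:ℕ) from by
        rw [show (2:ℝ) = ((2:ℕ):ℝ) from by norm_num, Real.rpow_natCast]]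
      rw [Complex.normSq_eq_norm_sq]
      push_cast
      rfl
    have hbn : ∀ j, ‖b j‖ ^ (2/(1+t)) = q j ^ ((1-t)⁻¹) := by
      intro j
      have hn : ‖b j‖ = ‖φ j‖ * ‖φ j‖ ^ (2*t/(1-t)) := by
        rw [hbdef]
        simp only [norm_mul, RingHomIsometric.norm_map]
        rw [Complex.norm_real, Real.norm_eq_abs,
          abs_of_nonneg (Real.rpow_nonneg (norm_nonneg _) _)]
      have hcollapse : ‖φ j‖ * ‖φ j‖ ^ (2*t/(1-t)) = ‖φ j‖ ^ ((1+t)/(1-t)) := by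
        rw [show (1+t)/(1-t) = 1 + 2*t/(1-t) from by field_simp; ring]
        rw [Real.rpow_add' (norm_nonneg _) (by
          have h2 : 0 ≤ 2*t/(1-t) := le_of_lt (div_pos (by linarith) h1t)
          intro hcon; nlinarith)]
        rw [Real.rpow_one]
      rw [hn, hcollapse, ← Real.rpow_mul (norm_nonneg _)]
      rw [show (1+t)/(1-t) * (2/(1+t)) = 2 * (1-t)⁻¹ from by field_simp]
      exact hhelp _ (norm_nonneg _) _
    have hψn : ∀ i, ‖ψ i‖ ^ (2/(1+t)) = p i ^ ((1+t)⁻¹) := by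
      intro i
      rw [show (2:ℝ)/(1+t) = 2 * (1+t)⁻¹ from by ring]
      exact hhelp _ (norm_nonneg _) _
    have hcore := core U hiso hc0 hcub ⟨ht0, ht1⟩ b ψ
    rw [← hφdef] at hcore
    rw [show (∑ j, b j * φ j) = ((Q t : ℝ) : ℂ) from by
        rw [hQdef]; push_cast; exact Finset.sum_congr rfl fun j _ => hbφ j] at hcore
    rw [show (∑ j, ‖b j‖ ^ (2/(1+t))) = Q t from by
        rw [hQdef]; exact Finset.sum_congr rfl fun j _ => hbn j] at hcore
    rw [show (∑ i, ‖ψ i‖ ^ (2/(1+t))) = P t from by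
        rw [hPdef]; exact Finset.sum_congr rfl fun i _ => hψn i] at hcore
    rw [Complex.norm_real, Real.norm_eq_abs, abs_of_pos hQpos] at hcore
    -- divide through
    have hstep : Q t ^ ((1-t)/2) ≤ c ^ t * P t ^ ((1+t)/2) := by
      have hXpos : 0 < Q t ^ ((1+t)/2) := Real.rpow_pos_of_pos hQpos _
      refine le_of_mul_le_mul_right ?_ hXpos
      calc Q t ^ ((1-t)/2) * Q t ^ ((1+t)/2) = Q t := by
            rw [← Real.rpow_add hQpos, show (1-t)/2 + (1+t)/2 = 1 from by ring,
              Real.rpow_one]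
      _ ≤ c ^ t * Q t ^ ((1+t)/2) * P t ^ ((1+t)/2) := hcore
      _ = c ^ t * P t ^ ((1+t)/2) * Q t ^ ((1+t)/2) := by ring
    have hlog := Real.log_le_log (Real.rpow_pos_of_pos hQpos _) hstep
    rw [Real.log_rpow hQpos, Real.log_mul (ne_of_gt (Real.rpow_pos_of_pos hc0 _))
      (ne_of_gt (Real.rpow_pos_of_pos hPpos _)), Real.log_rpow hc0,
      Real.log_rpow hPpos] at hlog
    rw [hgdef]
    simp only
    linarith
  -- Claim B : derivative of g at 0
  have hQd : HasDerivAt Q (∑ j, q j * Real.log (q j)) 0 := by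
    rw [hQdef]
    exact HasDerivAt.fun_sum fun j _ => deriv_aux1 (hq0 j)
  have hPd : HasDerivAt P (∑ i, -(p i * Real.log (p i))) 0 := by
    rw [hPdef]
    exact HasDerivAt.fun_sum fun i _ => deriv_aux2 (hp0 i)
  have hlogQ : HasDerivAt (fun t => Real.log (Q t)) (∑ j, q j * Real.log (q j)) 0 := by
    have := hQd.log (by rw [hQ0]; norm_num)
    simpa [hQ0] using this
  have hlogP : HasDerivAt (fun t => Real.log (P t)) (∑ i, -(p i * Real.log (p i))) 0 := by
    have := hPd.log (by rw [hP0]; norm_num)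
    simpa [hP0] using this
  have hgd : HasDerivAt g
      ((∑ j, q j * Real.log (q j) + ∑ i, p i * Real.log (p i))/2) 0 := by
    have h1 : HasDerivAt (fun t : ℝ => (1-t)/2) (-(1/2)) 0 := by
      refine (((hasDerivAt_id' (x := (0:ℝ))).const_sub 1).div_const 2).congr_deriv ?_
      norm_num
    have h2 : HasDerivAt (fun t : ℝ => (1+t)/2) (1/2) 0 := by
      convert (((hasDerivAt_id' (x := (0:ℝ))).const_add 1).div_const 2) using 1
    have hA := h1.fun_mul hlogQ
    have hB := h2.fun_mul hlogP
    have hAB := hA.fun_sub hB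
    rw [hgdef]
    refine hAB.congr_deriv ?_
    rw [hQ0, hP0]
    simp only [Real.log_one, Finset.sum_neg_distrib]
    ring
  -- slope argument
  have key : (∑ j, q j * Real.log (q j) + ∑ i, p i * Real.log (p i))/2 ≤ Real.log c := by
    have htends := hasDerivAt_iff_tendsto_slope.mp hgd
    have hsub : Set.Ioi (0:ℝ) ⊆ {(0:ℝ)}ᶜ := fun x hx => ne_of_gt hx
    have htends' := htends.mono_left (nhdsWithin_mono 0 hsub)
    refine le_of_tendsto htends' ?_
    filter_upwards [Ioo_mem_nhdsGT_of_mem (Set.mem_Ico.mpr ⟨le_refl 0, zero_lt_one⟩)]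
      with t htm
    rw [slope_def_field, hg0, sub_zero, sub_zero, div_le_iff₀ htm.1]
    have := claimA t htm
    linarith
  -- conclusion
  have e1 : shannonEntropy ψ = -∑ i, p i * Real.log (p i) := rfl
  have e2 : shannonEntropy (U.mulVec ψ) = -∑ j, q j * Real.log (q j) := rfl
  rw [e1, e2]
  linarith
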